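/- Let k > 0 and γ > 0 and let x : ℝ → ℝ be differentiable with x′(t) = −k·tanh(γ·x(t)) for all t ≥ 0. Then t ↦ |x(t)| is nonincreasing on [0, ∞) and x(t) → 0 as t → ∞. -/

import Mathlib

private lemma my_tanh_mono : Monotone Real.tanh := by
  intro a b hab
  rw [Real.tanh_eq_sinh_div_cosh, Real.tanh_eq_sinh_div_cosh,
    div_le_div_iff₀ (Real.cosh_pos a) (Real.cosh_pos b)]
  have h : 0 ≤ Real.sinh (b - a) := Real.sinh_nonneg_iff.2 (sub_nonneg.2 hab)
  rw [Real.sinh_sub] at h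
  nlinarith [h]

private lemma my_tanh_pos {a : ℝ} (ha : 0 < a) : 0 < Real.tanh a := by
  rw [Real.tanh_eq_sinh_div_cosh]
  exact div_pos (Real.sinh_pos_iff.2 ha) (Real.cosh_pos a)

private lemma my_helper_decay (k γ ε : ℝ) (hk : 0 < k) (hγ : 0 < γ) (hε : 0 < ε)
    (x : ℝ → ℝ)
    (hx : ∀ t, 0 ≤ t → HasDerivAt x (-(k * Real.tanh (γ * x t))) t)
    (hge : ∀ t, 0 ≤ t → ε ≤ x t) : False := by
  set c := k * Real.tanh (γ * ε) with hc
  have hcpos : 0 < c := mul_pos hk (my_tanh_pos (mul_pos hγ hε))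
  have hg : ∀ t ∈ Set.Ici (0:ℝ), HasDerivAt (fun s => x s + c * s)
      (-(k * Real.tanh (γ * x t)) + c) t := by
    intro t ht
    exact (hx t ht).add (by simpa using (hasDerivAt_id t).const_mul c)
  have hanti : AntitoneOn (fun s => x s + c * s) (Set.Ici 0) := by
    apply antitoneOn_of_deriv_nonpos (convex_Ici 0)
    · exact fun t ht => ((hg t ht).continuousAt).continuousWithinAt
    · intro t ht
      rw [interior_Ici] at ht
      exact ((hg t (Set.mem_Ici.2 (le_of_lt (Set.mem_Ioi.1 ht)))).differentiableAt).differentiableWithinAt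
    · intro t ht
      rw [interior_Ici] at ht
      rw [(hg t (Set.mem_Ici.2 (le_of_lt (Set.mem_Ioi.1 ht)))).deriv]
      have h1 : Real.tanh (γ * ε) ≤ Real.tanh (γ * x t) :=
        my_tanh_mono (by nlinarith [hge t (le_of_lt ht)])
      nlinarith [h1]
  set T := max 0 ((x 0 - ε) / c + 1) with hT
  have hT0 : (0:ℝ) ≤ T := le_max_left _ _
  have h2 : x T + c * T ≤ x 0 + c * 0 :=
    hanti Set.self_mem_Ici hT0 hT0
  have h3 : ε ≤ x T := hge T hT0
  have h4 : (x 0 - ε) / c + 1 ≤ T := le_max_right _ _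
  have h5 : c * T ≤ x 0 - ε := by nlinarith
  have h6 : c * ((x 0 - ε) / c + 1) ≤ c * T := by nlinarith
  rw [mul_add, mul_div_cancel₀ _ (ne_of_gt hcpos), mul_one] at h6
  linarith

private lemma my_helper_pos (k γ ε : ℝ) (hk : 0 < k) (hγ : 0 < γ) (hε : 0 < ε)
    (x : ℝ → ℝ)
    (hx : ∀ t, 0 ≤ t → HasDerivAt x (-(k * Real.tanh (γ * x t))) t)
    (habs : ∀ t, 0 ≤ t → ε ≤ |x t|) (h0 : 0 < x 0) : False := by
  apply my_helper_decay k γ ε hk hγ hε x hx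
  intro t ht
  rcases le_abs.1 (habs t ht) with h | h
  · exact h
  · -- x t ≤ -ε, contradiction via IVT
    exfalso
    have hcont : ContinuousOn x (Set.Icc 0 t) :=
      fun s hs => ((hx s hs.1).continuousAt).continuousWithinAt
    have hsub := intermediate_value_Icc' ht hcont
    have h0mem : (0:ℝ) ∈ Set.Icc (x t) (x 0) := ⟨by linarith, le_of_lt h0⟩
    obtain ⟨s, hs, hxs⟩ := hsub h0mem
    have := habs s hs.1
    rw [hxs] at this
    simp at this
    linarith

theorem sliding_mode_reaching_law_convergence
    (k γ : ℝ) (hk : 0 < k) (hγ : 0 < γ)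
    (x : ℝ → ℝ)
    (hx : ∀ t, 0 ≤ t → HasDerivAt x (-(k * Real.tanh (γ * x t))) t) :
    AntitoneOn (fun t => |x t|) (Set.Ici 0) ∧
      Filter.Tendsto x Filter.atTop (nhds 0) := by
  -- Part 1: x² is antitone on [0, ∞)
  have hq : ∀ t ∈ Set.Ici (0:ℝ), HasDerivAt (fun s => x s ^ 2)
      ((2 : ℕ) * x t ^ 1 * (-(k * Real.tanh (γ * x t)))) t :=
    fun t ht => (hx t ht).pow 2
  have hsgn : ∀ t : ℝ, 0 ≤ x t * Real.tanh (γ * x t) := by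
    intro t
    rcases le_or_gt 0 (x t) with h | h
    · have : Real.tanh 0 ≤ Real.tanh (γ * x t) :=
        my_tanh_mono (mul_nonneg (le_of_lt hγ) h)
      rw [Real.tanh_zero] at this
      exact mul_nonneg h this
    · have : Real.tanh (γ * x t) ≤ Real.tanh 0 :=
        my_tanh_mono (by nlinarith)
      rw [Real.tanh_zero] at this
      nlinarith
  have hsq : AntitoneOn (fun s => x s ^ 2) (Set.Ici 0) := by
    apply antitoneOn_of_deriv_nonpos (convex_Ici 0)
    · exact fun t ht => ((hq t ht).continuousAt).continuousWithinAt
    · intro t ht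
      rw [interior_Ici] at ht
      exact ((hq t (Set.mem_Ici.2 (le_of_lt (Set.mem_Ioi.1 ht)))).differentiableAt).differentiableWithinAt
    · intro t ht
      rw [interior_Ici] at ht
      rw [(hq t (Set.mem_Ici.2 (le_of_lt (Set.mem_Ioi.1 ht)))).deriv]
      push_cast [pow_one]
      nlinarith [hsgn t, hk.le]
  have hanti : AntitoneOn (fun t => |x t|) (Set.Ici 0) := by
    intro s hs t ht hst
    have h := hsq hs ht hst
    simp only at h ⊢
    rw [← Real.sqrt_sq_eq_abs, ← Real.sqrt_sq_eq_abs]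
    exact Real.sqrt_le_sqrt (by simpa [sq] using h)
  refine ⟨hanti, ?_⟩
  -- Part 2: convergence
  have key : ∀ ε > (0:ℝ), ∃ T ≥ (0:ℝ), |x T| < ε := by
    intro ε hε
    by_contra hcon
    push_neg at hcon
    have habs : ∀ t, 0 ≤ t → ε ≤ |x t| := fun t ht => hcon t ht
    have hx0 : ε ≤ |x 0| := habs 0 le_rfl
    rcases lt_trichotomy (x 0) 0 with h | h | h
    · -- apply helper to -x
      have hy : ∀ t, 0 ≤ t →
          HasDerivAt (fun s => -x s) (-(k * Real.tanh (γ * (-x t)))) t := by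
        intro t ht
        have h := (hx t ht).neg
        rw [neg_neg] at h
        rw [mul_neg, Real.tanh_neg, mul_neg, neg_neg]
        exact h
      exact my_helper_pos k γ ε hk hγ hε (fun s => -x s) hy
        (fun t ht => by simpa using habs t ht) (by simpa using h)
    · rw [h] at hx0; simp at hx0; linarith
    · exact my_helper_pos k γ ε hk hγ hε x hx habs h
  have habs0 : Filter.Tendsto (fun t => |x t|) Filter.atTop (nhds 0) := by
    rw [Metric.tendsto_atTop]
    intro ε hε
    obtain ⟨T, hT0, hT⟩ := key ε hε
    refine ⟨T, fun t ht => ?_⟩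
    have h1 : |x t| ≤ |x T| := hanti hT0 (le_trans hT0 ht) ht
    rw [Real.dist_eq, sub_zero, abs_abs]
    exact lt_of_le_of_lt h1 hT
  exact squeeze_zero_norm (fun t => le_refl |x t|) habs0
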